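/- arXiv:2403.03695 — 3 statements merged into one kernel-verified Lean document; each statement's English description precedes it below -/
import Mathlib

section
/- Let Q be a d×d matrix with nonnegative entries and real eigenvalues, and let r be a vector in R^d with all entries strictly positive. If the largest eigenvalue of Q is strictly greater than 1, then the linear system (I - Q) z = r admits no solution z with all entries nonnegative. -/
open Matrix

/-- If `Q` is a nonnegative matrix with real eigenvalues whose largest eigenvalue
is strictly greater than 1, and `r` is entrywise positive, then `(I - Q) z = r`
has no entrywise nonnegative solution. -/
theorem stmt_1 (d : ℕ) (Q : Matrix (Fin d) (Fin d) ℝ)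
    (hQpos : ∀ i j, 0 ≤ Q i j)
    (hreal : ∀ μ ∈ spectrum ℂ (Q.map (algebraMap ℝ ℂ)), μ.im = 0)
    (htop : ∃ μ ∈ spectrum ℂ (Q.map (algebraMap ℝ ℂ)), 1 < μ.re)
    (r : Fin d → ℝ) (hr : ∀ i, 0 < r i) :
    ¬ ∃ z : Fin d → ℝ, (∀ i, 0 ≤ z i) ∧
      ((1 : Matrix (Fin d) (Fin d) ℝ) - Q) *ᵥ z = r := by
  rintro ⟨z, hz, hsys⟩
  obtain ⟨μ, hμmem, hμ⟩ := htop
  set M := Q.map (algebraMap ℝ ℂ) with hM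
  -- extract an eigenvector
  have hnu := spectrum.mem_iff.mp hμmem
  rw [Algebra.algebraMap_eq_smul_one] at hnu
  have hdet : (μ • (1 : Matrix (Fin d) (Fin d) ℂ) - M).det = 0 := by
    by_contra h
    exact hnu ((Matrix.isUnit_iff_isUnit_det _).mpr (isUnit_iff_ne_zero.mpr h))
  obtain ⟨v, hv0, hv⟩ := (Matrix.exists_mulVec_eq_zero_iff).mpr hdet
  have heig : M *ᵥ v = μ • v := by
    rw [Matrix.sub_mulVec, sub_eq_zero] at hv
    rw [← hv, Matrix.smul_mulVec, Matrix.one_mulVec]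
  -- positivity of z
  have hQz : ∀ i, 0 ≤ (Q *ᵥ z) i := fun i => by
    simp only [Matrix.mulVec, dotProduct]
    exact Finset.sum_nonneg fun j _ => mul_nonneg (hQpos i j) (hz j)
  have hzr : ∀ i, z i - (Q *ᵥ z) i = r i := by
    intro i
    have := congrFun hsys i
    simpa [Matrix.sub_mulVec, Matrix.one_mulVec] using this
  have hzpos : ∀ i, 0 < z i := fun i => by
    have h1 := hzr i; have h2 := hQz i; have h3 := hr i; linarith
  -- modulus vector and maximizing index
  set w : Fin d → ℝ := fun i => ‖v i‖ with hw
  obtain ⟨j, hj⟩ : ∃ j, v j ≠ 0 := Function.ne_iff.mp hv0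
  obtain ⟨i0, -, hi0⟩ := Finset.exists_max_image Finset.univ (fun i => w i / z i)
    ⟨j, Finset.mem_univ j⟩
  set c := w i0 / z i0 with hc0
  have hwj : 0 < w j := norm_pos_iff.mpr hj
  have hc : 0 < c := lt_of_lt_of_le (div_pos hwj (hzpos j)) (hi0 j (Finset.mem_univ j))
  have hwle : ∀ k, w k ≤ c * z k := fun k => by
    have := hi0 k (Finset.mem_univ k)
    have hzk := hzpos k
    rw [div_le_iff₀ hzk] at this
    linarith [this]
  have hwi0 : w i0 = c * z i0 := by
    rw [hc0, div_mul_cancel₀ _ (ne_of_gt (hzpos i0))]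
  have hwi0pos : 0 < w i0 := by rw [hwi0]; exact mul_pos hc (hzpos i0)
  -- key estimate
  have key : ‖μ‖ * w i0 ≤ (Q *ᵥ w) i0 := by
    have h1 : (M *ᵥ v) i0 = μ * v i0 := by rw [heig]; simp
    calc ‖μ‖ * w i0 = ‖μ * v i0‖ := (norm_mul μ (v i0)).symm
      _ = ‖(M *ᵥ v) i0‖ := by rw [h1]
      _ = ‖∑ k, M i0 k * v k‖ := by
          simp [Matrix.mulVec, dotProduct]
      _ ≤ ∑ k, ‖M i0 k * v k‖ := norm_sum_le _ _
      _ = ∑ k, Q i0 k * w k := by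
          apply Finset.sum_congr rfl
          intro k _
          rw [norm_mul]
          congr 1
          simp [hM, Matrix.map_apply, Complex.norm_real, Real.norm_eq_abs, abs_of_nonneg (hQpos i0 k)]
      _ = (Q *ᵥ w) i0 := by simp [Matrix.mulVec, dotProduct]
  have h2 : (Q *ᵥ w) i0 ≤ c * (Q *ᵥ z) i0 := by
    simp only [Matrix.mulVec, dotProduct, Finset.mul_sum]
    apply Finset.sum_le_sum
    intro k _
    calc Q i0 k * w k ≤ Q i0 k * (c * z k) :=
          mul_le_mul_of_nonneg_left (hwle k) (hQpos i0 k)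
      _ = c * (Q i0 k * z k) := by ring
  have h3 : c * (Q *ᵥ z) i0 < c * z i0 := by
    have := hzr i0; have := hr i0
    have : (Q *ᵥ z) i0 < z i0 := by linarith
    exact mul_lt_mul_of_pos_left this hc
  have hlt : ‖μ‖ < 1 := by
    have h4 : ‖μ‖ * w i0 < w i0 := by
      calc ‖μ‖ * w i0 ≤ c * (Q *ᵥ z) i0 := le_trans key h2
        _ < c * z i0 := h3
        _ = w i0 := hwi0.symm
    nlinarith [hwi0pos]
  have : μ.re ≤ ‖μ‖ := le_trans (le_abs_self _) (Complex.abs_re_le_norm μ)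
  linarith
end

section
/- Let K ≥ 1, let Γ be a K×K matrix with nonnegative entries, g* ∈ R^K with nonzero entries, w ∈ R^K with strictly positive entries satisfying wᵀ D_{g*}² Γ = wᵀ, and λ* ∈ R satisfying λ* · 1 = g*^{⊙-1} + Γ(g* - 1). Then λ* = ⟨w, 2g* - 1⟩ / ⟨w, g*^{⊙2}⟩ ≤ 1, with equality if and only if g* = 1 (the all-ones vector). -/
open Matrix

/-- If `Γ` has nonnegative entries, `g*` has nonzero entries, `w` is entrywise
positive with `wᵀ D_{g*}² Γ = wᵀ`, and `λ* 1 = g*^{⊙-1} + Γ(g* - 1)`, then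
`λ* = ⟨w, 2g* - 1⟩ / ⟨w, g*^{⊙2}⟩ ≤ 1`, with equality iff `g* = 1`. -/
theorem stmt_12 (K : ℕ) (hK : 0 < K) (Γ : Matrix (Fin K) (Fin K) ℝ)
    (hΓ : ∀ i j, 0 ≤ Γ i j)
    (g : Fin K → ℝ) (hg : ∀ i, g i ≠ 0)
    (w : Fin K → ℝ) (hw : ∀ i, 0 < w i)
    (hweig : w ᵥ* (Matrix.diagonal (fun i => g i ^ 2) * Γ) = w)
    (lam : ℝ)
    (hlam : ∀ i, lam = (g i)⁻¹ + (Γ *ᵥ (fun j => g j - 1)) i) :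
    lam = (w ⬝ᵥ fun i => 2 * g i - 1) / (w ⬝ᵥ fun i => g i ^ 2) ∧
      lam ≤ 1 ∧ (lam = 1 ↔ g = fun _ => 1) := by
  haveI : Nonempty (Fin K) := ⟨⟨0, hK⟩⟩
  set S : ℝ := w ⬝ᵥ fun i => g i ^ 2 with hSdef
  have hS : 0 < S := by
    apply Finset.sum_pos
    · intro i _
      exact mul_pos (hw i) (pow_two_pos_of_ne_zero (hg i))
    · exact Finset.univ_nonempty
  have hweig' : ∀ j, ∑ i, w i * g i ^ 2 * Γ i j = w j := by
    intro j
    have := congrFun hweig j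
    simpa [vecMul, dotProduct, Matrix.mul_apply, Matrix.diagonal,
      Finset.mul_sum, mul_assoc] using this
  have key : lam * S = w ⬝ᵥ fun i => 2 * g i - 1 := by
    have h1 : lam * S = ∑ i, w i * g i ^ 2 * ((g i)⁻¹ + ∑ j, Γ i j * (g j - 1)) := by
      rw [hSdef]
      simp only [dotProduct, Finset.mul_sum]
      refine Finset.sum_congr rfl fun i _ => ?_
      rw [hlam i]
      simp [mulVec, dotProduct]
      ring
    have h2 : ∀ i, w i * g i ^ 2 * ((g i)⁻¹ + ∑ j, Γ i j * (g j - 1))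
        = w i * g i + ∑ j, w i * g i ^ 2 * Γ i j * (g j - 1) := by
      intro i
      rw [mul_add, Finset.mul_sum]
      congr 1
      · field_simp [hg i]
      · exact Finset.sum_congr rfl fun j _ => by ring
    rw [h1]
    simp only [h2, Finset.sum_add_distrib]
    rw [Finset.sum_comm]
    have h3 : ∑ j, ∑ i, w i * g i ^ 2 * Γ i j * (g j - 1) = ∑ j, w j * (g j - 1) := by
      refine Finset.sum_congr rfl fun j _ => ?_
      rw [← Finset.sum_mul, hweig' j]
    rw [h3]
    simp only [dotProduct, ← Finset.sum_add_distrib]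
    exact Finset.sum_congr rfl fun i _ => by ring
  have gap : S - lam * S = ∑ i, w i * (g i - 1) ^ 2 := by
    rw [key, hSdef]
    simp only [dotProduct, ← Finset.sum_sub_distrib]
    exact Finset.sum_congr rfl fun i _ => by ring
  have gapnn : 0 ≤ S - lam * S := by
    rw [gap]
    exact Finset.sum_nonneg fun i _ => mul_nonneg (hw i).le (by positivity)
  refine ⟨by rw [eq_div_iff hS.ne']; exact key, ?_, ?_⟩
  · nlinarith
  · constructor
    · intro hl
      have hzero : ∑ i, w i * (g i - 1) ^ 2 = 0 := by
        rw [← gap, hl]; ring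
      have := (Finset.sum_eq_zero_iff_of_nonneg
        (fun i _ => mul_nonneg (hw i).le (by positivity))).mp hzero
      funext i
      have hi := this i (Finset.mem_univ i)
      have : (g i - 1) ^ 2 = 0 := by
        rcases mul_eq_zero.mp hi with h | h
        · exact absurd h (hw i).ne'
        · exact h
      have h2 := pow_eq_zero_iff (n := 2) (by norm_num) |>.mp this
      linarith [h2]
    · intro hgl
      have hk : lam * S = S := by
        rw [key, hSdef]
        simp [dotProduct, hgl]
        norm_num
      exact mul_right_cancel₀ hS.ne' (by rw [one_mul]; exact hk)
end

section
/- Let M be a K×K real matrix, diagonalizable with real eigenvalues φ₁ > φ₂ ≥ ... ≥ φ_K where φ₁ = 1 is simple, with right eigenvector v^r and left eigenvector v^l for the eigenvalue 1, normalized so that ⟨v^l, v^r⟩ = 1. Suppose M(ε) is a family of matrices depending differentiably on ε with M(0) = M, whose top eigenvalue φ₁(ε) is differentiable at 0 with derivative φ₁'(0) ≠ 0. Then lim_{ε→0⁺} ε (I - M(ε))^{-1} exists and equals (-1/φ₁'(0)) v^r (v^l)ᵀ, provided φ₁(ε) ≠ 1 for small ε > 0 and I - M(ε) is invertible for small ε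 > 0. -/
open Matrix Filter

section Aux
variable {n : Type*} [Fintype n] [DecidableEq n]

lemma trace_adjugate_mul (A B : Matrix n n ℝ) :
    (Matrix.adjugate A * B).trace = ∑ i, (A.updateCol i (fun k => B k i)).det := by
  simp only [Matrix.trace, Matrix.diag, Matrix.mul_apply]
  refine Finset.sum_congr rfl fun i _ => ?_
  have h := congrFun (Matrix.cramer_eq_adjugate_mulVec A (fun k => B k i)) i
  rw [Matrix.cramer_apply] at h
  rw [h, Matrix.mulVec, dotProduct]

lemma hasDerivAt_det (A : ℝ → Matrix n n ℝ) (A' : Matrix n n ℝ) (t : ℝ)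
    (h : ∀ i j, HasDerivAt (fun s => A s i j) (A' i j) t) :
    HasDerivAt (fun s => (A s).det) ((Matrix.adjugate (A t) * A').trace) t := by
  have key : ∀ σ : Equiv.Perm n,
      HasDerivAt (fun s => ∏ i, A s (σ i) i)
        (∑ i, (∏ j ∈ Finset.univ.erase i, A t (σ j) j) * A' (σ i) i) t := by
    intro σ
    simpa [smul_eq_mul] using
      (HasDerivAt.fun_finsetProd (u := Finset.univ) (f := fun i s => A s (σ i) i)
        (f' := fun i => A' (σ i) i) (fun i _ => h (σ i) i))
  have main : HasDerivAt (fun s => (A s).det)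
      (∑ σ : Equiv.Perm n, (Equiv.Perm.sign σ : ℝ) *
        ∑ i, (∏ j ∈ Finset.univ.erase i, A t (σ j) j) * A' (σ i) i) t := by
    simp only [Matrix.det_apply']
    exact HasDerivAt.fun_sum fun σ _ => ((key σ).const_mul _)
  convert main using 1
  rw [trace_adjugate_mul]
  calc ∑ i, ((A t).updateCol i fun k => A' k i).det
      = ∑ i, ∑ σ : Equiv.Perm n, (Equiv.Perm.sign σ : ℝ) *
          ((∏ j ∈ Finset.univ.erase i, A t (σ j) j) * A' (σ i) i) := by
        refine Finset.sum_congr rfl fun i _ => ?_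
        rw [Matrix.det_apply']
        refine Finset.sum_congr rfl fun σ _ => ?_
        congr 1
        rw [← Finset.mul_prod_erase Finset.univ _ (Finset.mem_univ i)]
        rw [Matrix.updateCol_apply, if_pos rfl]
        rw [mul_comm]
        congr 1
        refine Finset.prod_congr rfl fun j hj => ?_
        rw [Matrix.updateCol_apply, if_neg (Finset.ne_of_mem_erase hj)]
    _ = ∑ σ : Equiv.Perm n, (Equiv.Perm.sign σ : ℝ) *
          ∑ i, (∏ j ∈ Finset.univ.erase i, A t (σ j) j) * A' (σ i) i := by
        rw [Finset.sum_comm]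
        simp [Finset.mul_sum]

lemma det_eq_zero_of_mem_spectrum {x : ℝ} {A : Matrix n n ℝ}
    (hx : x ∈ spectrum ℝ A) : (x • (1 : Matrix n n ℝ) - A).det = 0 := by
  rw [spectrum.mem_iff] at hx
  by_contra hdet
  have hdet' : IsUnit (x • (1 : Matrix n n ℝ) - A).det := isUnit_iff_ne_zero.mpr hdet
  rw [← Matrix.isUnit_iff_isUnit_det] at hdet'
  exact hx (by simpa [Algebra.algebraMap_eq_smul_one] using hdet')

end Aux


variable {n : Type*} [Fintype n] [DecidableEq n]

lemma charpoly_conj (P A : Matrix n n ℝ) (hP : IsUnit P.det) :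
    (P * A * P⁻¹).charpoly = A.charpoly := by
  have hPP : P * P⁻¹ = 1 := Matrix.mul_nonsing_inv P hP
  set f := (Polynomial.C.mapMatrix : Matrix n n ℝ →+* Matrix n n (Polynomial ℝ)) with hf
  have h1 : f P * f P⁻¹ = 1 := by rw [← _root_.map_mul, hPP, _root_.map_one]
  have hc : Matrix.charmatrix (P * A * P⁻¹) = f P * Matrix.charmatrix A * f P⁻¹ := by
    unfold Matrix.charmatrix
    rw [_root_.map_mul, _root_.map_mul, Matrix.mul_sub, Matrix.sub_mul]
    congr 1
    rw [← (Matrix.scalar_commute (Polynomial.X : Polynomial ℝ) (fun r => Commute.all _ _) (f P)).eq,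
      Matrix.mul_assoc, h1, mul_one]
  have hdet1 : (f P).det * (f P⁻¹).det = 1 := by rw [← Matrix.det_mul, h1, Matrix.det_one]
  rw [Matrix.charpoly, Matrix.charpoly, hc, Matrix.det_mul, Matrix.det_mul]
  ring_nf
  calc (f P).det * (Matrix.charmatrix A).det * (f P⁻¹).det
      = (Matrix.charmatrix A).det * ((f P).det * (f P⁻¹).det) := by ring
    _ = (Matrix.charmatrix A).det := by rw [hdet1, mul_one]

lemma charpoly_diag (d : n → ℝ) :
    (Matrix.diagonal d).charpoly = ∏ i, (Polynomial.X - Polynomial.C (d i)) := by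
  have h : Matrix.charmatrix (Matrix.diagonal d)
      = Matrix.diagonal (fun i => (Polynomial.X : Polynomial ℝ) - Polynomial.C (d i)) := by
    ext i j
    rcases eq_or_ne i j with rfl | hij
    · rw [Matrix.charmatrix_apply_eq, Matrix.diagonal_apply_eq, Matrix.diagonal_apply_eq]
    · rw [Matrix.charmatrix_apply_ne _ _ _ hij, Matrix.diagonal_apply_ne _ hij,
        Matrix.diagonal_apply_ne _ hij, map_zero, neg_zero]
  rw [Matrix.charpoly, h, Matrix.det_diagonal]

lemma count_roots_diag (d : n → ℝ) :
    Multiset.count 1 (Matrix.diagonal d).charpoly.roots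
      = (Finset.univ.filter (fun i => d i = 1)).card := by
  have h : (Matrix.diagonal d).charpoly.roots = Multiset.map d Finset.univ.val := by
    rw [charpoly_diag]
    have : ∏ i, ((Polynomial.X : Polynomial ℝ) - Polynomial.C (d i))
        = ((Finset.univ.val.map d).map (fun a => (Polynomial.X : Polynomial ℝ) - Polynomial.C a)).prod := by
      rw [Multiset.map_map]; rfl
    rw [this, Polynomial.roots_multiset_prod_X_sub_C]
  rw [h, Multiset.count_map, Finset.card, Finset.filter_val]
  exact congrArg Multiset.card (Multiset.filter_congr (fun x _ => eq_comm))

example : True := trivial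


/-- If `M` is diagonalizable with real eigenvalues, its top eigenvalue `1` is
simple with biorthogonal right/left eigenvectors `v^r, v^l` (`⟨v^l, v^r⟩ = 1`),
and `M(ε)` is a differentiable family with `M(0) = M` whose top eigenvalue
`φ₁(ε)` is differentiable at `0` with `φ₁'(0) ≠ 0`, then (provided
`φ₁(ε) ≠ 1` and `I - M(ε)` is invertible for small `ε > 0`)
`ε (I - M(ε))⁻¹ → (-1/φ₁'(0)) v^r (v^l)ᵀ` as `ε → 0⁺`. -/

theorem stmt_17 (K : ℕ) (M : Matrix (Fin K) (Fin K) ℝ)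
    (hdiag : ∃ (P : Matrix (Fin K) (Fin K) ℝ) (d : Fin K → ℝ),
      IsUnit P.det ∧ M = P * Matrix.diagonal d * P⁻¹)
    (hsimple : Multiset.count 1 M.charpoly.roots = 1)
    (htop : ∀ μ ∈ spectrum ℝ M, μ ≤ 1)
    (vr vl : Fin K → ℝ)
    (hvr : M *ᵥ vr = vr) (hvl : vl ᵥ* M = vl) (hbi : vl ⬝ᵥ vr = 1)
    (Mf : ℝ → Matrix (Fin K) (Fin K) ℝ) (hM0 : Mf 0 = M)
    (hMdiff : ∀ i j, DifferentiableAt ℝ (fun ε => Mf ε i j) 0)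
    (φ : ℝ → ℝ) (hφ0 : φ 0 = 1)
    (hφtop : ∀ ε, φ ε ∈ spectrum ℝ (Mf ε) ∧ ∀ μ ∈ spectrum ℝ (Mf ε), μ ≤ φ ε)
    (φ' : ℝ) (hφ' : HasDerivAt φ φ' 0) (hφ'0 : φ' ≠ 0)
    (hreg : ∀ᶠ ε in nhdsWithin 0 (Set.Ioi 0),
      φ ε ≠ 1 ∧ IsUnit ((1 : Matrix (Fin K) (Fin K) ℝ) - Mf ε)) :
    Tendsto (fun ε => ε • ((1 : Matrix (Fin K) (Fin K) ℝ) - Mf ε)⁻¹)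
      (nhdsWithin 0 (Set.Ioi 0))
      (nhds ((-1 / φ') • Matrix.vecMulVec vr vl)) := by
  obtain ⟨P, d, hP, hMP⟩ := hdiag
  have hPP : P * P⁻¹ = 1 := Matrix.mul_nonsing_inv P hP
  have hPP' : P⁻¹ * P = 1 := Matrix.nonsing_inv_mul P hP
  -- the unique index with eigenvalue 1
  have hcount : (Finset.univ.filter (fun i => d i = 1)).card = 1 := by
    rw [← count_roots_diag, ← charpoly_conj P (Matrix.diagonal d) hP, ← hMP]
    exact hsimple
  obtain ⟨i₀, hfil⟩ := Finset.card_eq_one.mp hcount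
  have hmem : i₀ ∈ Finset.univ.filter (fun i => d i = 1) := by
    rw [hfil]; exact Finset.mem_singleton_self i₀
  have hd0 : d i₀ = 1 := (Finset.mem_filter.mp hmem).2
  have hdne : ∀ j, j ≠ i₀ → d j ≠ 1 := by
    intro j hj h
    have hmem2 : j ∈ ({i₀} : Finset (Fin K)) := by
      rw [← hfil]; exact Finset.mem_filter.mpr ⟨Finset.mem_univ j, h⟩
    exact hj (Finset.mem_singleton.mp hmem2)
  set c : ℝ := ∏ j ∈ Finset.univ.erase i₀, (1 - d j) with hcdef
  have hcne : c ≠ 0 := Finset.prod_ne_zero_iff.mpr fun j hj => sub_ne_zero.mpr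
    fun h => hdne j (Finset.ne_of_mem_erase hj) h.symm
  -- conjugation form of 1 - M
  have h1M : (1 : Matrix (Fin K) (Fin K) ℝ) - M
      = P * Matrix.diagonal (fun i => 1 - d i) * P⁻¹ := by
    have hdd : Matrix.diagonal (fun i : Fin K => 1 - d i)
        = 1 - Matrix.diagonal d := by
      ext i j
      rcases eq_or_ne i j with rfl | h
      · simp [Matrix.diagonal_apply_eq, Matrix.one_apply_eq, Matrix.sub_apply]
      · simp [Matrix.diagonal_apply_ne _ h, Matrix.one_apply_ne h, Matrix.sub_apply]
    rw [hMP, hdd, Matrix.mul_sub, Matrix.sub_mul, Matrix.mul_one, hPP]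
  -- adjugate formulas
  have adj_eq : ∀ (A : Matrix (Fin K) (Fin K) ℝ), IsUnit A.det → A.adjugate = A.det • A⁻¹ := by
    intro A hA
    rw [Matrix.inv_def, smul_smul, Ring.mul_inverse_cancel _ hA, one_smul]
  have hPinvdet : IsUnit (P⁻¹).det := P.isUnit_nonsing_inv_det hP
  have hdetinv : P.det * (P⁻¹).det = 1 := by
    rw [← Matrix.det_mul, hPP, Matrix.det_one]
  set g : Fin K → ℝ := fun i => ∏ j ∈ Finset.univ.erase i, (1 - d j) with hgdef
  have hg0 : ∀ i, i ≠ i₀ → g i = 0 := by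
    intro i hi
    refine Finset.prod_eq_zero (Finset.mem_erase.mpr ⟨fun h => hi h.symm, Finset.mem_univ _⟩) ?_
    rw [hd0, sub_self]
  have hadjM : ((1 : Matrix (Fin K) (Fin K) ℝ) - M).adjugate
      = P * Matrix.diagonal g * P⁻¹ := by
    rw [h1M, Matrix.adjugate_mul_distrib, Matrix.adjugate_mul_distrib,
      Matrix.adjugate_diagonal, adj_eq _ hPinvdet, adj_eq _ hP,
      Matrix.nonsing_inv_nonsing_inv P hP]
    simp only [Matrix.smul_mul, Matrix.mul_smul, smul_smul]
    rw [hdetinv, one_smul, Matrix.mul_assoc]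
  -- eigenvector alignment
  set x : Fin K → ℝ := P⁻¹ *ᵥ vr with hxdef
  set y : Fin K → ℝ := vl ᵥ* P with hydef
  have hxv : P *ᵥ x = vr := by
    rw [hxdef, Matrix.mulVec_mulVec, hPP, Matrix.one_mulVec]
  have hyv : y ᵥ* P⁻¹ = vl := by
    rw [hydef, Matrix.vecMul_vecMul, hPP, Matrix.vecMul_one]
  have hMP2 : M * P = P * Matrix.diagonal d := by
    rw [hMP, Matrix.mul_assoc, hPP', Matrix.mul_one]
  have hdx : ∀ i, d i * x i = x i := by
    intro i
    have h2 : P⁻¹ * M * P = Matrix.diagonal d := by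
      rw [Matrix.mul_assoc, hMP2, ← Matrix.mul_assoc, hPP', Matrix.one_mul]
    have h1 : Matrix.diagonal d *ᵥ x = x := by
      calc Matrix.diagonal d *ᵥ x = (P⁻¹ * M * P) *ᵥ (P⁻¹ *ᵥ vr) := by rw [h2]
        _ = ((P⁻¹ * M * P) * P⁻¹) *ᵥ vr := by rw [Matrix.mulVec_mulVec]
        _ = (P⁻¹ * M) *ᵥ vr := by
            rw [Matrix.mul_assoc (P⁻¹ * M) P P⁻¹, hPP, Matrix.mul_one]
        _ = P⁻¹ *ᵥ (M *ᵥ vr) := by rw [← Matrix.mulVec_mulVec]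
        _ = x := by rw [hvr]
    have := congrFun h1 i
    rwa [Matrix.mulVec_diagonal] at this
  have hdy : ∀ i, y i * d i = y i := by
    intro i
    have h1 : y ᵥ* Matrix.diagonal d = y := by
      calc y ᵥ* Matrix.diagonal d = vl ᵥ* (P * Matrix.diagonal d) := by
            rw [hydef, Matrix.vecMul_vecMul]
        _ = (vl ᵥ* M) ᵥ* P := by rw [← hMP2, Matrix.vecMul_vecMul]
        _ = y := by rw [hvl]
    have := congrFun h1 i
    rwa [Matrix.vecMul_diagonal] at this
  have hx0 : ∀ i, i ≠ i₀ → x i = 0 := by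
    intro i hi
    have h2 : (d i - 1) * x i = 0 := by have := hdx i; ring_nf; linarith
    rcases mul_eq_zero.mp h2 with h | h
    · exact absurd (by linarith [sub_eq_zero.mp h] : d i = 1) (hdne i hi)
    · exact h
  have hy0 : ∀ i, i ≠ i₀ → y i = 0 := by
    intro i hi
    have h2 : y i * (d i - 1) = 0 := by have := hdy i; ring_nf; linarith
    rcases mul_eq_zero.mp h2 with h | h
    · exact h
    · exact absurd (by linarith [sub_eq_zero.mp h] : d i = 1) (hdne i hi)
  have hvr' : ∀ a, vr a = x i₀ * P a i₀ := by
    intro a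
    have h1 : vr a = ∑ k, P a k * x k := by
      rw [← hxv, Matrix.mulVec, dotProduct]
    rw [h1, Finset.sum_eq_single i₀ (fun k _ hk => by rw [hx0 k hk, mul_zero])
      (fun h => absurd (Finset.mem_univ i₀) h)]
    ring
  have hvl' : ∀ b, vl b = y i₀ * P⁻¹ i₀ b := by
    intro b
    have h1 : vl b = ∑ k, y k * P⁻¹ k b := by
      rw [← hyv, Matrix.vecMul, dotProduct]
    rw [h1, Finset.sum_eq_single i₀ (fun k _ hk => by rw [hy0 k hk, zero_mul])
      (fun h => absurd (Finset.mem_univ i₀) h)]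
  have hnorm : ∑ b, P⁻¹ i₀ b * P b i₀ = 1 := by
    have := congrFun (congrFun hPP' i₀) i₀
    rw [Matrix.mul_apply] at this
    rw [this, Matrix.one_apply_eq]
  have hαβ : x i₀ * y i₀ = 1 := by
    have h1 : ∑ b, vl b * vr b = (x i₀ * y i₀) * ∑ b, P⁻¹ i₀ b * P b i₀ := by
      rw [Finset.mul_sum]
      refine Finset.sum_congr rfl fun b _ => ?_
      rw [hvl' b, hvr' b]; ring
    rw [dotProduct] at hbi
    rw [hbi] at h1
    rw [hnorm, mul_one] at h1
    exact h1.symm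
  -- structure of adjugate of 1 - M
  have hN : ((1 : Matrix (Fin K) (Fin K) ℝ) - M).adjugate = c • Matrix.vecMulVec vr vl := by
    ext a b
    rw [hadjM, Matrix.smul_apply, Matrix.vecMulVec_apply, Matrix.mul_assoc, Matrix.mul_apply]
    rw [Finset.sum_eq_single i₀]
    · rw [Matrix.diagonal_mul, hvr' a, hvl' b, smul_eq_mul]
      have hgi : g i₀ = c := rfl
      rw [hgi]
      have : (x i₀ * P a i₀) * (y i₀ * P⁻¹ i₀ b) = (x i₀ * y i₀) * (P a i₀ * P⁻¹ i₀ b) := by ring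
      rw [this, hαβ, one_mul]
      ring
    · intro k _ hk
      rw [Matrix.diagonal_mul, hg0 k hk, zero_mul, mul_zero]
    · exact fun h => absurd (Finset.mem_univ i₀) h
  have htr : ((1 : Matrix (Fin K) (Fin K) ℝ) - M).adjugate.trace = c := by
    rw [hN, Matrix.trace_smul, smul_eq_mul]
    have h1 : (Matrix.vecMulVec vr vl).trace = ∑ a, vr a * vl a := by
      simp [Matrix.trace, Matrix.diag, Matrix.vecMulVec_apply]
    have h2 : ∑ a, vr a * vl a = vl ⬝ᵥ vr := by
      rw [dotProduct]
      exact Finset.sum_congr rfl fun a _ => mul_comm _ _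
    rw [h1, h2, hbi, mul_one]
  -- derivatives
  set N : Matrix (Fin K) (Fin K) ℝ := ((1 : Matrix (Fin K) (Fin K) ℝ) - M).adjugate with hNdef
  set M' : Matrix (Fin K) (Fin K) ℝ :=
    Matrix.of (fun i j => deriv (fun ε => Mf ε i j) 0) with hM'def
  have hM' : ∀ i j, HasDerivAt (fun ε => Mf ε i j) (M' i j) 0 :=
    fun i j => (hMdiff i j).hasDerivAt
  have hD : HasDerivAt (fun ε => ((1 : Matrix (Fin K) (Fin K) ℝ) - Mf ε).det)
      ((N * (-M')).trace) 0 := by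
    have := hasDerivAt_det (fun ε => (1 : Matrix (Fin K) (Fin K) ℝ) - Mf ε) (-M') 0
      (fun i j => by
        have h1 : HasDerivAt (fun ε => (1 : Matrix (Fin K) (Fin K) ℝ) i j - Mf ε i j)
            (0 - M' i j) 0 := (hasDerivAt_const _ _).sub (hM' i j)
        simpa [Matrix.sub_apply, Matrix.neg_apply] using h1)
    simpa [hM0, hNdef] using this
  have hE : HasDerivAt (fun ε => ((φ ε) • (1 : Matrix (Fin K) (Fin K) ℝ) - Mf ε).det)
      ((N * (φ' • (1 : Matrix (Fin K) (Fin K) ℝ) - M')).trace) 0 := by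
    have := hasDerivAt_det (fun ε => (φ ε) • (1 : Matrix (Fin K) (Fin K) ℝ) - Mf ε)
      (φ' • (1 : Matrix (Fin K) (Fin K) ℝ) - M') 0
      (fun i j => by
        have h1 : HasDerivAt (fun ε => φ ε * (1 : Matrix (Fin K) (Fin K) ℝ) i j - Mf ε i j)
            (φ' * (1 : Matrix (Fin K) (Fin K) ℝ) i j - M' i j) 0 :=
          (hφ'.mul_const _).sub (hM' i j)
        simpa [Matrix.sub_apply, Matrix.smul_apply, smul_eq_mul] using h1)
    simpa [hM0, hφ0, one_smul, hNdef] using this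
  have hEzero : ∀ ε, ((φ ε) • (1 : Matrix (Fin K) (Fin K) ℝ) - Mf ε).det = 0 :=
    fun ε => det_eq_zero_of_mem_spectrum (hφtop ε).1
  have hEtr : (N * (φ' • (1 : Matrix (Fin K) (Fin K) ℝ) - M')).trace = 0 := by
    have h0 : HasDerivAt (fun ε => ((φ ε) • (1 : Matrix (Fin K) (Fin K) ℝ) - Mf ε).det)
        0 0 := by
      have : (fun ε => ((φ ε) • (1 : Matrix (Fin K) (Fin K) ℝ) - Mf ε).det)
          = fun _ => (0 : ℝ) := funext hEzero
      rw [this]; exact hasDerivAt_const _ _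
    exact hE.unique h0
  have hNM' : (N * M').trace = φ' * c := by
    have h1 : N * (φ' • (1 : Matrix (Fin K) (Fin K) ℝ) - M')
        = φ' • N - N * M' := by
      rw [Matrix.mul_sub, Matrix.mul_smul, Matrix.mul_one]
    rw [h1, Matrix.trace_sub, Matrix.trace_smul, smul_eq_mul, htr] at hEtr
    linarith
  have hD' : (N * (-M')).trace = -(φ' * c) := by
    rw [show N * (-M') = -(N * M') from by rw [Matrix.mul_neg], Matrix.trace_neg, hNM']
  -- determinant at zero
  have hdet0 : ((1 : Matrix (Fin K) (Fin K) ℝ) - M).det = 0 := by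
    have h1 := (hφtop 0).1
    rw [hφ0, hM0] at h1
    have := det_eq_zero_of_mem_spectrum h1
    rwa [one_smul] at this
  -- slope limits
  have htend1 : Tendsto (fun ε => ((1 : Matrix (Fin K) (Fin K) ℝ) - Mf ε).det / ε)
      (nhdsWithin 0 (Set.Ioi 0)) (nhds (-(φ' * c))) := by
    have h1 := (hasDerivAt_iff_tendsto_slope.mp hD).mono_left
      (nhdsWithin_mono 0 (fun z hz => Set.mem_compl_singleton_iff.mpr (ne_of_gt hz)))
    rw [hD'] at h1
    refine h1.congr fun ε => ?_
    rw [slope_def_field]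
    rw [hM0, hdet0, sub_zero, sub_zero]
  have htend2 : Tendsto (fun ε => ε / ((1 : Matrix (Fin K) (Fin K) ℝ) - Mf ε).det)
      (nhdsWithin 0 (Set.Ioi 0)) (nhds (-(φ' * c))⁻¹) := by
    have := htend1.inv₀ (by simpa using mul_ne_zero hφ'0 hcne)
    refine this.congr fun ε => ?_
    rw [inv_div]
  -- continuity of the adjugate
  have htend3 : Tendsto (fun ε => ((1 : Matrix (Fin K) (Fin K) ℝ) - Mf ε).adjugate)
      (nhdsWithin 0 (Set.Ioi 0)) (nhds N) := by
    have hcont : ContinuousAt (fun ε => (1 : Matrix (Fin K) (Fin K) ℝ) - Mf ε) 0 := by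
      apply continuousAt_pi.mpr
      intro i
      apply continuousAt_pi.mpr
      intro j
      exact (continuousAt_const.sub (hMdiff i j).continuousAt :)
    have hadjcont : Continuous (fun A : Matrix (Fin K) (Fin K) ℝ => A.adjugate) :=
      continuous_id.matrix_adjugate
    have := (hadjcont.continuousAt.comp hcont).tendsto
    rw [Function.comp] at this
    have h0 : ((1 : Matrix (Fin K) (Fin K) ℝ) - Mf 0).adjugate = N := by rw [hM0]
    rw [h0] at this
    exact this.mono_left nhdsWithin_le_nhds
  have hmain : Tendsto (fun ε => (ε / ((1 : Matrix (Fin K) (Fin K) ℝ) - Mf ε).det)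
        • ((1 : Matrix (Fin K) (Fin K) ℝ) - Mf ε).adjugate)
      (nhdsWithin 0 (Set.Ioi 0)) (nhds ((-(φ' * c))⁻¹ • N)) :=
    htend2.smul htend3
  -- identify the limit
  have hlim : (-(φ' * c))⁻¹ • N = (-1 / φ') • Matrix.vecMulVec vr vl := by
    rw [hN, smul_smul]
    congr 1
    field_simp
  rw [← hlim]
  refine Tendsto.congr' ?_ hmain
  filter_upwards [hreg] with ε hε
  obtain ⟨-, hu⟩ := hε
  rw [Matrix.inv_def, Ring.inverse_eq_inv, smul_smul, ← div_eq_mul_inv]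
end
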